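/- For nonnegative integers p, q and u ∈ ℂ, the integral ∫_ℂ v̄^p v^q e^{u v̄ - |v|²} dV(v) equals 0 if p > q, and equals (q!/(q-p)!) · u^{q-p} if p ≤ q, where dV is Lebesgue measure on ℂ divided by π. -/

import Mathlib

open MeasureTheory Complex Set Filter

private lemma int1d (i : ℕ) {c : ℝ} (hc : 0 < c) :
    Integrable (fun x : ℝ => |x| ^ i * Real.exp (-c * x ^ 2)) := by
  have h := (integrable_rpow_mul_exp_neg_mul_sq hc
    (lt_of_lt_of_le (by norm_num : (-1:ℝ) < 0) (Nat.cast_nonneg i))).abs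
  simp_rw [Real.rpow_natCast] at h
  simpa [abs_mul, abs_pow, abs_of_pos (Real.exp_pos _)] using h

private lemma intA (m : ℕ) {c : ℝ} (hc : 0 < c) :
    Integrable (fun v : ℂ => ‖v‖ ^ m * Real.exp (-c * ‖v‖ ^ 2)) := by
  rw [← MeasurePreserving.integrable_comp_emb Complex.volume_preserving_equiv_real_prod.symm
    (Complex.measurableEquivRealProd.symm.measurableEmbedding)]
  have hg : Integrable (fun z : ℝ × ℝ => ∑ i ∈ Finset.range (m+1),
      ((|z.1| ^ i * Real.exp (-c * z.1 ^ 2)) * (|z.2| ^ (m - i) * Real.exp (-c * z.2 ^ 2))) *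
        (m.choose i : ℝ)) := by
    apply integrable_finset_sum
    intro i _
    exact ((int1d i hc).mul_prod (int1d (m-i) hc)).mul_const _
  apply Integrable.mono' hg
  · have hcont : Continuous fun z : ℝ × ℝ => Complex.measurableEquivRealProd.symm z := by
      have h : (fun z : ℝ × ℝ => Complex.measurableEquivRealProd.symm z)
          = fun z : ℝ × ℝ => Complex.equivRealProdCLM.symm z := rfl
      rw [h]; exact Complex.equivRealProdCLM.symm.continuous
    exact (((continuous_norm.pow m).mul
      (Real.continuous_exp.comp (continuous_const.mul (continuous_norm.pow 2)))).comp
      hcont).aestronglyMeasurable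
  · filter_upwards with z
    have h2 : ‖Complex.measurableEquivRealProd.symm z‖ ^ 2 = z.1^2 + z.2^2 := by
      rw [Complex.sq_norm, Complex.normSq_apply, Complex.measurableEquivRealProd_symm_apply]
      simp
      ring
    have h1 : ‖Complex.measurableEquivRealProd.symm z‖ ≤ |z.1| + |z.2| := by
      simpa [Complex.measurableEquivRealProd_symm_apply] using
        Complex.norm_le_abs_re_add_abs_im (Complex.measurableEquivRealProd.symm z)
    have hpos : (0:ℝ) ≤ Real.exp (-c * z.1^2) * Real.exp (-c * z.2^2) := by positivity
    calc ‖(fun v : ℂ => ‖v‖ ^ m * Real.exp (-c * ‖v‖ ^ 2))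
          (Complex.measurableEquivRealProd.symm z)‖
        = ‖Complex.measurableEquivRealProd.symm z‖ ^ m *
            Real.exp (-c * ‖Complex.measurableEquivRealProd.symm z‖ ^ 2) := by
          exact abs_of_nonneg (by positivity)
      _ ≤ (|z.1| + |z.2|) ^ m * (Real.exp (-c * z.1^2) * Real.exp (-c * z.2^2)) := by
          rw [h2, neg_mul, mul_add, neg_add, Real.exp_add, ← neg_mul, ← neg_mul]
          exact mul_le_mul_of_nonneg_right
            (pow_le_pow_left₀ (norm_nonneg _) h1 m) hpos
      _ = ∑ i ∈ Finset.range (m+1),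
            ((|z.1| ^ i * Real.exp (-c * z.1 ^ 2)) * (|z.2| ^ (m - i) * Real.exp (-c * z.2 ^ 2))) *
              (m.choose i : ℝ) := by
          rw [add_pow, Finset.sum_mul]
          apply Finset.sum_congr rfl
          intro i _
          ring

private lemma momB (m n : ℕ) :
    ∫ v : ℂ, (starRingEnd ℂ) v ^ m * v ^ n * Complex.exp (-(‖v‖ ^ 2 : ℝ)) =
      if m = n then (Real.pi : ℂ) * n.factorial else 0 := by
  have hsep : ∫ v : ℂ, (starRingEnd ℂ) v ^ m * v ^ n * Complex.exp (-(‖v‖ ^ 2 : ℝ)) =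
      (∫ r in Ioi (0:ℝ), ((r ^ (m+n+1) * Real.exp (-r^2) : ℝ) : ℂ)) *
      (∫ θ in Ioo (-Real.pi) Real.pi,
        Complex.exp (((((n:ℤ) - m : ℤ) : ℂ) * Complex.I) * θ)) := by
    rw [← Complex.integral_comp_polarCoord_symm, polarCoord_target]
    rw [← setIntegral_prod_mul, Measure.volume_eq_prod]
    apply setIntegral_congr_fun (measurableSet_Ioi.prod measurableSet_Ioo)
    intro p hp
    obtain ⟨hr, hθ⟩ := hp
    have hv : Complex.polarCoord.symm p = (p.1 : ℂ) * Complex.exp (p.2 * Complex.I) := by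
      rw [Complex.polarCoord_symm_apply, Complex.exp_mul_I, ← Complex.ofReal_cos,
        ← Complex.ofReal_sin]
    have hcv : (starRingEnd ℂ) (Complex.polarCoord.symm p)
        = (p.1 : ℂ) * Complex.exp (-(p.2 * Complex.I)) := by
      rw [hv, map_mul, ← Complex.exp_conj]
      simp [map_mul, Complex.conj_I]
    have hva : ‖Complex.polarCoord.symm p‖ = p.1 := by
      rw [Complex.norm_polarCoord_symm, abs_of_pos hr]
    simp only
    rw [hva, hcv, hv, Complex.real_smul]
    rw [mul_pow, mul_pow, ← Complex.exp_nat_mul, ← Complex.exp_nat_mul]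
    push_cast
    have hE : Complex.exp ((m:ℂ) * -((p.2:ℂ) * Complex.I)) *
        Complex.exp ((n:ℂ) * ((p.2:ℂ) * Complex.I)) =
        Complex.exp (((n:ℂ) - (m:ℂ)) * Complex.I * (p.2:ℂ)) := by
      rw [← Complex.exp_add]; congr 1; push_cast; ring
    rw [← hE]; ring
  rw [hsep]
  rcases eq_or_ne m n with h | h
  · subst h
    rw [if_pos rfl]
    have hrad : ∫ r in Ioi (0:ℝ), r ^ (m+m+1) * Real.exp (-r^2)
        = (1/2) * Real.Gamma ((m:ℝ) + 1) := by
      have h2 := _root_.integral_rpow_mul_exp_neg_rpow (p := 2) (q := (m+m+1 : ℕ))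
        (by norm_num) (lt_of_lt_of_le (by norm_num) (Nat.cast_nonneg _))
      rw [show (((m+m+1:ℕ):ℝ)+1)/2 = (m:ℝ)+1 by push_cast; ring] at h2
      rw [← h2]
      apply setIntegral_congr_fun measurableSet_Ioi
      intro x hx
      show x ^ (m+m+1) * Real.exp (-x ^ 2) = x ^ ((m+m+1:ℕ):ℝ) * Real.exp (-x ^ (2:ℝ))
      rw [show ((2:ℝ)) = ((2:ℕ):ℝ) by norm_num, Real.rpow_natCast, Real.rpow_natCast]
    have hang : ∫ θ in Ioo (-Real.pi) Real.pi,
        Complex.exp (((((m:ℤ) - m : ℤ) : ℂ) * Complex.I) * θ) = 2 * Real.pi := by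
      simp only [sub_self, Int.cast_zero, zero_mul, Complex.exp_zero]
      simp [Real.volume_Ioo, two_mul, ENNReal.toReal_ofReal Real.pi_pos.le,
        ENNReal.toReal_ofReal (by positivity : (0:ℝ) ≤ Real.pi + Real.pi),
          max_eq_left (by positivity : (0:ℝ) ≤ Real.pi + Real.pi)]
    have hradC : ∫ r in Ioi (0:ℝ), ((r ^ (m+m+1) * Real.exp (-r^2) : ℝ) : ℂ)
        = ((1/2 * Real.Gamma ((m:ℝ)+1) : ℝ) : ℂ) := by
      rw [← hrad]; exact integral_ofReal
    rw [hang, hradC, Real.Gamma_nat_eq_factorial]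
    push_cast
    ring
  · rw [if_neg h]
    have hk : ((n:ℤ) - m : ℤ) ≠ 0 := sub_ne_zero.mpr (by exact_mod_cast h.symm)
    have hc : ((((n:ℤ) - m : ℤ) : ℂ)) * Complex.I ≠ 0 :=
      mul_ne_zero (by exact_mod_cast hk) Complex.I_ne_zero
    have hang : ∫ θ in Ioo (-Real.pi) Real.pi,
        Complex.exp (((((n:ℤ) - m : ℤ) : ℂ) * Complex.I) * θ) = 0 := by
      rw [← integral_Ioc_eq_integral_Ioo,
        ← intervalIntegral.integral_of_le (by linarith [Real.pi_pos] : -Real.pi ≤ Real.pi),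
        integral_exp_mul_complex hc]
      set k : ℤ := (n:ℤ) - m
      have h1 : (k:ℂ) * Complex.I * (Real.pi:ℂ) = k * (Real.pi * Complex.I) := by ring
      have h2 : (k:ℂ) * Complex.I * ((-Real.pi:ℝ):ℂ) = k * -(Real.pi * Complex.I) := by
        push_cast; ring
      rw [h1, h2, Complex.exp_int_mul, Complex.exp_int_mul, Complex.exp_pi_mul_I,
        Complex.exp_neg, Complex.exp_pi_mul_I]
      norm_num
    rw [hang, mul_zero]

theorem stmt_8 (p q : ℕ) (u : ℂ) :
    ∫ v : ℂ,
        ((starRingEnd ℂ) v) ^ p * v ^ q *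
          Complex.exp (u * (starRingEnd ℂ) v - ((‖v‖ : ℝ) ^ 2 : ℝ))
      ∂((ENNReal.ofReal Real.pi)⁻¹ • (volume : Measure ℂ)) =
    if p ≤ q then ((q.factorial / (q - p).factorial : ℕ) : ℂ) * u ^ (q - p) else 0 := by
  have hπ := Real.pi_pos
  have cont_mom : ∀ a b : ℕ, Continuous (fun v : ℂ =>
      (starRingEnd ℂ) v ^ a * v ^ b * Complex.exp (-(‖v‖ ^ 2 : ℝ))) := by
    intro a b
    exact ((continuous_conj.pow a).mul (continuous_pow b)).mul
      (Complex.continuous_exp.comp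
        ((Complex.continuous_ofReal.comp (continuous_norm.pow 2)).neg))
  have int_mom : ∀ a b : ℕ, Integrable (fun v : ℂ =>
      (starRingEnd ℂ) v ^ a * v ^ b * Complex.exp (-(‖v‖ ^ 2 : ℝ))) := by
    intro a b
    apply Integrable.mono' (intA (a+b) (by norm_num : (0:ℝ) < 1))
      ((cont_mom a b).aestronglyMeasurable)
    filter_upwards with v
    rw [norm_mul, norm_mul, norm_pow, norm_pow, 
      Complex.norm_conj, Complex.norm_exp]
    simp only [Complex.ofReal_neg, Complex.neg_re, Complex.ofReal_re, neg_mul, one_mul]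
    rw [pow_add]
  set f : ℂ → ℂ := fun v => (starRingEnd ℂ) v ^ p * v ^ q *
    Complex.exp (u * (starRingEnd ℂ) v - ((‖v‖ : ℝ) ^ 2 : ℝ)) with hf
  set F : ℕ → ℂ → ℂ := fun N v => ∑ n ∈ Finset.range N,
    (u ^ n / n.factorial) * ((starRingEnd ℂ) v ^ (p+n) * v ^ q *
      Complex.exp (-(‖v‖ ^ 2 : ℝ))) with hFdef
  have hF : ∀ N v, F N v = (∑ n ∈ Finset.range N, (u * (starRingEnd ℂ) v) ^ n / n.factorial) *
      ((starRingEnd ℂ) v ^ p * v ^ q * Complex.exp (-(‖v‖ ^ 2 : ℝ))) := by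
    intro N v
    rw [hFdef, Finset.sum_mul]
    apply Finset.sum_congr rfl
    intro n _
    rw [mul_pow, pow_add]
    ring
  set T : ℂ := if p ≤ q then (Real.pi : ℂ) * ((q.factorial / (q - p).factorial : ℕ) : ℂ)
      * u ^ (q - p) else 0 with hT
  have hInt : ∀ N, (∫ v, F N v) = ∑ n ∈ Finset.range N,
      (u^n / n.factorial) * (if p + n = q then (Real.pi:ℂ) * q.factorial else 0) := by
    intro N
    rw [hFdef, integral_finset_sum _ (fun n _ => ((int_mom (p+n) q).const_mul _))]
    exact Finset.sum_congr rfl fun n _ => by rw [integral_const_mul, momB]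
  have hval : ∀ N, q + 1 ≤ N → (∑ n ∈ Finset.range N,
      (u^n / n.factorial) * (if p + n = q then (Real.pi:ℂ) * q.factorial else 0)) = T := by
    intro N hN
    rw [hT]
    rcases le_or_gt p q with hpq | hpq
    · rw [if_pos hpq, Finset.sum_eq_single (q-p)]
      · rw [if_pos (by omega)]
        rw [Nat.cast_div_charZero (Nat.factorial_dvd_factorial (Nat.sub_le q p))]
        have h1 : ((q-p).factorial : ℂ) ≠ 0 := by exact_mod_cast (q-p).factorial_ne_zero
        field_simp
      · intro n _ hn
        rw [if_neg (by omega), mul_zero]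
      · intro hmem
        exact absurd (Finset.mem_range.mpr (by omega)) hmem
    · rw [if_neg (not_le.mpr hpq)]
      apply Finset.sum_eq_zero
      intro n _
      rw [if_neg (by omega), mul_zero]
  have hlim1 : Filter.Tendsto (fun N => ∫ v, F N v) Filter.atTop (nhds T) := by
    apply tendsto_atTop_of_eventually_const (i₀ := q+1)
    intro N hN
    rw [hInt N, hval N hN]
  set a : ℝ := ‖u‖ with ha
  set bound : ℂ → ℝ := fun v => Real.exp (a^2/2) *
    (‖v‖ ^ (p+q) * Real.exp (-(1/2:ℝ) * ‖v‖ ^ 2)) with hbd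
  have hlim2 : Filter.Tendsto (fun N => ∫ v, F N v) Filter.atTop (nhds (∫ v, f v)) := by
    apply MeasureTheory.tendsto_integral_of_dominated_convergence bound
    · intro N
      apply Continuous.aestronglyMeasurable
      apply continuous_finset_sum
      intro n _
      exact continuous_const.mul (cont_mom (p+n) q)
    · exact (intA (p+q) (by norm_num : (0:ℝ) < 1/2)).const_mul _
    · intro N
      filter_upwards with v
      rw [hF, norm_mul]
      have hrest : ‖(starRingEnd ℂ) v ^ p * v ^ q * Complex.exp (-(‖v‖ ^ 2 : ℝ))‖
          = ‖v‖ ^ p * ‖v‖ ^ q * Real.exp (-(‖v‖ ^ 2)) := by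
        rw [norm_mul, norm_mul, norm_pow, norm_pow, 
          Complex.norm_conj, Complex.norm_exp]
        simp only [Complex.neg_re, Complex.ofReal_re]
      rw [hrest]
      have hS : ‖∑ n ∈ Finset.range N, (u * (starRingEnd ℂ) v) ^ n / (n.factorial : ℂ)‖ ≤
          Real.exp (a * ‖v‖) := by
        refine le_trans (norm_sum_le _ _) ?_
        refine le_trans (le_of_eq ?_) (Real.sum_le_exp_of_nonneg
          (by positivity : (0:ℝ) ≤ a * ‖v‖) N)
        apply Finset.sum_congr rfl
        intro n _
        rw [norm_div, norm_pow, norm_mul, Complex.norm_conj,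
          Complex.norm_natCast, ha]
      calc ‖∑ n ∈ Finset.range N, (u * (starRingEnd ℂ) v) ^ n / ((n.factorial : ℕ) : ℂ)‖ *
            (‖v‖ ^ p * ‖v‖ ^ q * Real.exp (-(‖v‖ ^ 2)))
          ≤ Real.exp (a * ‖v‖) *
            (‖v‖ ^ p * ‖v‖ ^ q * Real.exp (-(‖v‖ ^ 2))) := by
            apply mul_le_mul_of_nonneg_right hS (by positivity)
        _ ≤ bound v := by
            rw [hbd, ← pow_add]
            rw [show Real.exp (a * ‖v‖) *
              (‖v‖ ^ (p+q) * Real.exp (-(‖v‖ ^ 2)))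
              = ‖v‖ ^ (p+q) *
                (Real.exp (a * ‖v‖) * Real.exp (-(‖v‖ ^ 2))) by ring]
            show _ ≤ Real.exp (a^2/2) *
                (‖v‖ ^ (p+q) * Real.exp (-(1/2:ℝ) * ‖v‖ ^ 2))
            rw [show Real.exp (a^2/2) * (‖v‖ ^ (p+q) *
                Real.exp (-(1/2:ℝ) * ‖v‖ ^ 2)) = ‖v‖ ^ (p+q) *
                (Real.exp (a^2/2) * Real.exp (-(1/2:ℝ) * ‖v‖ ^ 2)) by ring]
            apply mul_le_mul_of_nonneg_left _ (by positivity)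
            rw [← Real.exp_add, ← Real.exp_add]
            apply Real.exp_le_exp.mpr
            nlinarith [sq_nonneg (a - ‖v‖), norm_nonneg v]
    · filter_upwards with v
      have hfv : f v = Complex.exp (u * (starRingEnd ℂ) v) *
          ((starRingEnd ℂ) v ^ p * v ^ q * Complex.exp (-(‖v‖ ^ 2 : ℝ))) := by
        rw [hf]
        simp only
        rw [sub_eq_add_neg, Complex.exp_add, ← Complex.ofReal_neg]
        ring
      rw [hfv]
      have hs := NormedSpace.expSeries_div_hasSum_exp (u * (starRingEnd ℂ) v)
      rw [← Complex.exp_eq_exp_ℂ] at hs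
      have := hs.tendsto_sum_nat.mul_const
        ((starRingEnd ℂ) v ^ p * v ^ q * Complex.exp (-(‖v‖ ^ 2 : ℝ)))
      simp only [← hF] at this
      exact this
  have key : (∫ v, f v) = T := tendsto_nhds_unique hlim2 hlim1
  rw [integral_smul_measure, key, ENNReal.toReal_inv, ENNReal.toReal_ofReal hπ.le, hT]
  split_ifs with h
  · rw [Complex.real_smul, Complex.ofReal_inv]
    have : (Real.pi : ℂ) ≠ 0 := Complex.ofReal_ne_zero.mpr hπ.ne'
    field_simp
  · rw [smul_zero]
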